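/- Let y ≠ 0, 0 < λ₁ ≤ ‖Xᵀy‖_∞, and θ₁* the projection of y/λ₁ onto C = {θ : ‖Xᵀθ‖_∞ ≤ 1}. Then ⟨y/λ₁ - θ₁*, y⟩ ≥ 0, with equality if and only if λ₁ = ‖Xᵀy‖_∞. -/

import Mathlib

open RealInnerProductSpace

/-- Let `y ≠ 0`, `0 < λ₁ ≤ ‖Xᵀy‖_∞`, and `θ₁*` the projection of `y/λ₁` onto
`C = {θ : ‖Xᵀθ‖_∞ ≤ 1}`. Then `⟪y/λ₁ - θ₁*, y⟫ ≥ 0`, with equality iff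
`λ₁ = ‖Xᵀy‖_∞`. -/
theorem stmt_8 {n p : ℕ} (X : Fin p → EuclideanSpace ℝ (Fin n))
    (y : EuclideanSpace ℝ (Fin n)) (hy : y ≠ 0) (lmax : ℝ)
    (hlmax : IsGreatest (Set.range fun j => |(⟪X j, y⟫)|) lmax)
    (lam1 : ℝ) (hlam1 : 0 < lam1) (hlam1le : lam1 ≤ lmax)
    (θ1 : EuclideanSpace ℝ (Fin n))
    (hθ1mem : ∀ j, |(⟪X j, θ1⟫)| ≤ 1)
    (hθ1opt : ∀ θ : EuclideanSpace ℝ (Fin n), (∀ j, |(⟪X j, θ⟫)| ≤ 1) →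
      ‖θ1 - (1 / lam1) • y‖ ≤ ‖θ - (1 / lam1) • y‖) :
    ⟪(1 / lam1) • y - θ1, y⟫ ≥ 0 ∧ (⟪(1 / lam1) • y - θ1, y⟫ = 0 ↔ lam1 = lmax) := by
  set v : EuclideanSpace ℝ (Fin n) := (1 / lam1) • y with hv
  have hlam1' : lam1 ≠ 0 := ne_of_gt hlam1
  have hyv : y = lam1 • v := by
    rw [hv, smul_smul]
    field_simp
    rw [one_smul]
  -- variational inequality at θ = 0 (via scaling θ1 by (1-t))
  have hkey : ∀ t : ℝ, 0 < t → t ≤ 1 →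
      2 * t * ⟪θ1 - v, θ1⟫ ≤ t ^ 2 * ‖θ1‖ ^ 2 := by
    intro t ht ht1
    have hmem : ∀ j, |⟪X j, (1 - t) • θ1⟫| ≤ 1 := by
      intro j
      rw [real_inner_smul_right, abs_mul, abs_of_nonneg (by linarith : (0:ℝ) ≤ 1 - t)]
      have := hθ1mem j
      nlinarith [abs_nonneg (⟪X j, θ1⟫)]
    have h := hθ1opt _ hmem
    have h2 : ‖θ1 - v‖ ^ 2 ≤ ‖(1 - t) • θ1 - v‖ ^ 2 :=
      pow_le_pow_left₀ (norm_nonneg _) h 2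
    have hre : (1 - t) • θ1 - v = (θ1 - v) - t • θ1 := by
      rw [sub_smul, one_smul]; abel
    have hexp := norm_sub_sq_real (θ1 - v) (t • θ1)
    have hi : ⟪θ1 - v, t • θ1⟫ = t * ⟪θ1 - v, θ1⟫ := real_inner_smul_right _ _ _
    have hns : ‖t • θ1‖ ^ 2 = t ^ 2 * ‖θ1‖ ^ 2 := by
      rw [norm_smul, Real.norm_eq_abs, mul_pow, sq_abs]
    rw [hre] at h2
    rw [hi, hns] at hexp
    linarith [hexp ▸ h2]
  have hpos : 0 ≤ ⟪v - θ1, θ1⟫ := by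
    by_contra h
    push_neg at h
    have hc : 0 < ⟪θ1 - v, θ1⟫ := by
      have heq : ⟪θ1 - v, θ1⟫ = -⟪v - θ1, θ1⟫ := by
        rw [← inner_neg_left]; congr 1; abel
      rw [heq]; linarith
    have hθ1ne : θ1 ≠ 0 := by
      intro h0
      rw [h0] at hc
      simp at hc
    have hnormpos : 0 < ‖θ1‖ ^ 2 := pow_pos (norm_pos_iff.mpr hθ1ne) 2
    set c := ⟪θ1 - v, θ1⟫ with hcdef
    set t := min 1 (c / ‖θ1‖ ^ 2) with htdef
    have ht0 : 0 < t := lt_min one_pos (by positivity)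
    have ht1 : t ≤ 1 := min_le_left _ _
    have ht2 : t ≤ c / ‖θ1‖ ^ 2 := min_le_right _ _
    have htc : t * ‖θ1‖ ^ 2 ≤ c := (le_div_iff₀ hnormpos).mp ht2
    have := hkey t ht0 ht1
    nlinarith
  have hinnerdecomp : ⟪v - θ1, y⟫ = lam1 * (‖v - θ1‖ ^ 2 + ⟪v - θ1, θ1⟫) := by
    rw [hyv, real_inner_smul_right]
    congr 1
    have hh : v = (v - θ1) + θ1 := by abel
    nth_rewrite 2 [hh]
    rw [inner_add_right, real_inner_self_eq_norm_sq]
  constructor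
  · rw [hinnerdecomp]
    positivity
  constructor
  · intro h
    rw [hinnerdecomp] at h
    have hn : ‖v - θ1‖ ^ 2 = 0 := by nlinarith [sq_nonneg ‖v - θ1‖]
    have hveq : v = θ1 := by
      rwa [pow_eq_zero_iff (by norm_num), norm_eq_zero, sub_eq_zero] at hn
    have hle : lmax ≤ lam1 := by
      obtain ⟨(j0 : Fin p), hj0⟩ := hlmax.1
      have hj0' : |⟪X j0, y⟫| = lmax := hj0
      rw [← hj0']
      have hi : ⟪X j0, y⟫ = lam1 * ⟪X j0, v⟫ := by rw [hyv, real_inner_smul_right]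
      rw [hi, abs_mul, abs_of_pos hlam1, hveq]
      calc lam1 * |⟪X j0, θ1⟫| ≤ lam1 * 1 :=
            mul_le_mul_of_nonneg_left (hθ1mem j0) hlam1.le
        _ = lam1 := mul_one _
    exact le_antisymm hlam1le hle
  · intro h
    have hvC : ∀ j, |⟪X j, v⟫| ≤ 1 := by
      intro j
      rw [hv, real_inner_smul_right, abs_mul, abs_of_pos (by positivity : (0:ℝ) < 1 / lam1)]
      have hjle : |⟪X j, y⟫| ≤ lmax := hlmax.2 ⟨j, rfl⟩
      rw [div_mul_eq_mul_div, one_mul, div_le_one hlam1, h]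
      exact hjle
    have h0 := hθ1opt v hvC
    rw [sub_self, norm_zero] at h0
    have hveq : θ1 = v := by
      rwa [norm_le_zero_iff, sub_eq_zero] at h0
    rw [hveq, sub_self, inner_zero_left]
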